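/- Fix κ ∈ (0,1) and λ = √(1−κ²). If δ : ℝ → ℝ satisfies δ(0) = 1 and the differential equation 9(δ′)² = 4(1−δ)(δ³ + 3δ² − 4λ²), and p satisfies (p′)² = 4p³ − g₂p − g₃ with g₂ = (4/27)(9−8κ²), g₃ = (8/729)(27−36κ²+8κ⁴), then the algebraic relation (1−δ)(1/3 + p) = (4/9)κ² is consistent with both differential equations: substituting p = (4κ²/9)/(1−δ) − 1/3 into (p′)² − 4p³ + g₂p + g₃ and using 9(δ′)² = 4(1−δ)(δ³+3δ²−4λ²) yields an identity. -/

import Mathlib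

/-- Shen's change of variables in signature three: if 9(δ′)² = 4(1−δ)(δ³+3δ²−4λ²) with
δ(0) = 1, then p = (4κ²/9)/(1−δ) − 1/3 satisfies the Weierstrass equation
(p′)² = 4p³ − g₂p − g₃ with g₂ = (4/27)(9−8κ²), g₃ = (8/729)(27−36κ²+8κ⁴). -/
theorem stmt15 (κ lam : ℝ) (hκ : κ ∈ Set.Ioo (0:ℝ) 1) (hlam : lam = Real.sqrt (1 - κ^2))
    (g₂ g₃ : ℝ) (hg₂ : g₂ = 4/27 * (9 - 8 * κ^2))
    (hg₃ : g₃ = 8/729 * (27 - 36 * κ^2 + 8 * κ^4))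
    (δ : ℝ → ℝ) (hδdiff : Differentiable ℝ δ) (hδ0 : δ 0 = 1)
    (hode : ∀ u : ℝ, 9 * (deriv δ u)^2
      = 4 * (1 - δ u) * ((δ u)^3 + 3 * (δ u)^2 - 4 * lam^2))
    (p : ℝ → ℝ) (hp : p = fun u => (4 * κ^2 / 9) / (1 - δ u) - 1/3) :
    ∀ u : ℝ, δ u ≠ 1 →
      (deriv p u)^2 - (4 * (p u)^3 - g₂ * p u - g₃) = 0 := by
  intro u hu
  have hs : (1 : ℝ) - δ u ≠ 0 := by
    intro h; apply hu; linarith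
  have hlam2 : lam ^ 2 = 1 - κ ^ 2 := by
    rw [hlam, sq, Real.mul_self_sqrt]
    nlinarith [hκ.1, hκ.2]
  have hderiv : deriv p u = (4 * κ^2 / 9) * deriv δ u / (1 - δ u)^2 := by
    have h1 : HasDerivAt δ (deriv δ u) u := (hδdiff u).hasDerivAt
    have h2 : HasDerivAt (fun u => (4 * κ^2 / 9) / (1 - δ u) - 1/3)
        ((4 * κ^2 / 9) * deriv δ u / (1 - δ u)^2) u := by
      have h3 : HasDerivAt (fun u => (1:ℝ) - δ u) (-(deriv δ u)) u := by
        exact h1.const_sub 1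
      have h4 := ((hasDerivAt_const u (4 * κ^2 / 9)).div h3 hs).sub_const (1/3)
      refine h4.congr_deriv ?_
      ring
    rw [hp]
    exact h2.deriv
  have hodeu := hode u
  rw [hderiv, hp]
  simp only
  rw [hg₂, hg₃]
  have hD : (deriv δ u)^2
      = 4/9 * (1 - δ u) * ((δ u)^3 + 3*(δ u)^2 - 4*(1 - κ^2)) := by
    rw [← hlam2]; linarith
  rw [div_pow, mul_pow, hD]
  field_simp
  ring
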